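/- Let N be a simple network, i.e. a phylogenetic network that contains at least one reticulation vertex and in which every cut-arc is trivial. Then every SN-set S of the triplet set T(N) with |S| > 1 satisfies S = L(N); equivalently, all nontrivial SN-sets of T(N) are singletons. -/

import Mathlib

/-!
Common definitions for formalizing "Constructing the Simplest Possible
Phylogenetic Network from Triplets" (van Iersel, Kelk).

A directed graph on a vertex type `V` is given by its arc set `A : Set (V × V)`.
-/

namespace Phylo

variable {V L : Type}

/-- In-degree of a vertex. -/
noncomputable def indeg (A : Set (V × V)) (v : V) : ℕ := {u | (u, v) ∈ A}.ncard

/-- Out-degree of a vertex. -/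
noncomputable def outdeg (A : Set (V × V)) (v : V) : ℕ := {w | (v, w) ∈ A}.ncard

/-- The root: indegree 0 and outdegree 2. -/
def IsRoot (A : Set (V × V)) (v : V) : Prop := indeg A v = 0 ∧ outdeg A v = 2

/-- A split vertex: indegree 1 and outdegree 2. -/
def IsSplit (A : Set (V × V)) (v : V) : Prop := indeg A v = 1 ∧ outdeg A v = 2

/-- A reticulation vertex: indegree 2 and outdegree 1. -/
def IsRetic (A : Set (V × V)) (v : V) : Prop := indeg A v = 2 ∧ outdeg A v = 1

/-- A leaf vertex: indegree 1 and outdegree 0. -/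
def IsLeafV (A : Set (V × V)) (v : V) : Prop := indeg A v = 1 ∧ outdeg A v = 0

/-- Directed reachability (reflexive-transitive closure of the arc relation). -/
def Reaches (A : Set (V × V)) : V → V → Prop :=
  Relation.ReflTransGen fun u v => (u, v) ∈ A

/-- A directed graph is acyclic if it has no directed cycle. -/
def Acyclic (A : Set (V × V)) : Prop := ∀ u v, (u, v) ∈ A → ¬ Reaches A v u

/-- Adjacency in the underlying undirected graph. -/
def UAdj (A : Set (V × V)) (u v : V) : Prop := (u, v) ∈ A ∨ (v, u) ∈ A

/-- The underlying undirected graph is connected (on all of `V`). -/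
def ConnectedGraph (A : Set (V × V)) : Prop :=
  ∀ u v : V, Relation.ReflTransGen (UAdj A) u v

/-- Undirected connectivity within a set `S` of vertices (in the induced subgraph). -/
def ConnWithin (A : Set (V × V)) (S : Set V) : Prop :=
  ∀ u ∈ S, ∀ v ∈ S, Relation.ReflTransGen (fun a b => a ∈ S ∧ b ∈ S ∧ UAdj A a b) u v

/-- A set of at least two vertices inducing a biconnected subgraph: it is connected
and stays connected after removal of any single vertex. -/
def Biconnected (A : Set (V × V)) (S : Set V) : Prop :=
  2 ≤ S.ncard ∧ ConnWithin A S ∧ ∀ w ∈ S, ConnWithin A (S \ {w})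

/-- A biconnected component: a maximal biconnected subgraph. -/
def BiconnComp (A : Set (V × V)) (S : Set V) : Prop :=
  Biconnected A S ∧ ∀ S', Biconnected A S' → S ⊆ S' → S' = S

/-- The arcs leaving a set of vertices. -/
def outArcs (A : Set (V × V)) (S : Set V) : Set (V × V) :=
  {a ∈ A | a.1 ∈ S ∧ a.2 ∉ S}

/-- A phylogenetic network on the (finite) vertex type `V` with leaves labelled by
elements of `L`: a directed acyclic graph with exactly one vertex of indegree 0
and outdegree 2 (the root), all other vertices being split vertices, reticulation
vertices or leaves; leaves are distinctly labelled.  Moreover (to avoid redundant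
networks) every nontrivial biconnected component has at least three outgoing arcs. -/
structure PhyloNetwork (V L : Type) : Type where
  vfin : Finite V
  arcs : Set (V × V)
  lab : V → L
  acyclic : Acyclic arcs
  root_ex : ∃ r, IsRoot arcs r
  root_unique : ∀ r r', IsRoot arcs r → IsRoot arcs r' → r = r'
  vertex_type : ∀ v, IsRoot arcs v ∨ IsSplit arcs v ∨ IsRetic arcs v ∨ IsLeafV arcs v
  lab_inj : ∀ u v, IsLeafV arcs u → IsLeafV arcs v → lab u = lab v → u = v
  bicomp_out : ∀ S, BiconnComp arcs S → S.ncard ≠ 2 → 3 ≤ (outArcs arcs S).ncard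

/-- The set of leaf labels of a network. -/
def leafSet (N : PhyloNetwork V L) : Set L := {x | ∃ v, IsLeafV N.arcs v ∧ N.lab v = x}

/-- A directed path, as a nonempty list of distinct vertices consecutively joined by arcs. -/
def IsPath (A : Set (V × V)) (l : List V) : Prop :=
  l ≠ [] ∧ l.Nodup ∧ l.Chain' fun a b => (a, b) ∈ A

/-- A directed path from `u` to `v`. -/
def IsPathFromTo (A : Set (V × V)) (l : List V) (u v : V) : Prop :=
  IsPath A l ∧ l.head? = some u ∧ l.getLast? = some v

/-- `w` is an endpoint of the path `l`. -/
def IsEndpoint (l : List V) (w : V) : Prop := l.head? = some w ∨ l.getLast? = some w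

/-- Two paths are internally vertex-disjoint: any common vertex is an endpoint of both. -/
def IntDisjoint (p q : List V) : Prop :=
  ∀ w, w ∈ p → w ∈ q → IsEndpoint p w ∧ IsEndpoint q w

/-- An embedding of the triplet `xy|z` with summit `p` and cherry vertex `q`:
pairwise internally vertex-disjoint directed paths `q→x`, `q→y`, `p→q`, `p→z`. -/
def HasEmbedding (A : Set (V × V)) (p q x y z : V) : Prop :=
  p ≠ q ∧ ∃ Pqx Pqy Ppq Ppz : List V,
    IsPathFromTo A Pqx q x ∧ IsPathFromTo A Pqy q y ∧
    IsPathFromTo A Ppq p q ∧ IsPathFromTo A Ppz p z ∧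
    IntDisjoint Pqx Pqy ∧ IntDisjoint Pqx Ppq ∧ IntDisjoint Pqx Ppz ∧
    IntDisjoint Pqy Ppq ∧ IntDisjoint Pqy Ppz ∧ IntDisjoint Ppq Ppz

/-- The triplet `xy|z` (on leaf labels) is consistent with the network `N`. -/
def ConsistentT (N : PhyloNetwork V L) (x y z : L) : Prop :=
  ∃ a b c : V, IsLeafV N.arcs a ∧ IsLeafV N.arcs b ∧ IsLeafV N.arcs c ∧
    N.lab a = x ∧ N.lab b = y ∧ N.lab c = z ∧ a ≠ b ∧ a ≠ c ∧ b ≠ c ∧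
    ∃ p q, HasEmbedding N.arcs p q a b c

/-- `T(N)`: the set of all triplets consistent with `N`
(the triple `(x,y,z)` codes the triplet `xy|z`). -/
def TN (N : PhyloNetwork V L) : Set (L × L × L) := {t | ConsistentT N t.1 t.2.1 t.2.2}

/-- `N` is consistent with every triplet in `T`. -/
def ConsistentSet (N : PhyloNetwork V L) (T : Set (L × L × L)) : Prop :=
  ∀ t ∈ T, ConsistentT N t.1 t.2.1 t.2.2

/-- `N` reflects `T` if `T(N) = T`. -/
def Reflects (N : PhyloNetwork V L) (T : Set (L × L × L)) : Prop := TN N = T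

/-- `L(T)`: the set of leaves occurring in a triplet set. -/
def tripletLeaves (T : Set (L × L × L)) : Set L :=
  {x | ∃ t ∈ T, x = t.1 ∨ x = t.2.1 ∨ x = t.2.2}

/-- `T` is a well-formed triplet set: in each triplet the three leaves are distinct, and
the coding is invariant under swapping the first two coordinates (`xy|z = yx|z`). -/
def IsTripletSet (T : Set (L × L × L)) : Prop :=
  ∀ t ∈ T, (t.2.1, t.1, t.2.2) ∈ T ∧ t.1 ≠ t.2.1 ∧ t.1 ≠ t.2.2 ∧ t.2.1 ≠ t.2.2

/-- `T` is dense: for any three distinct leaves at least one triplet on them is present. -/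
def DenseT (T : Set (L × L × L)) : Prop :=
  ∀ x ∈ tripletLeaves T, ∀ y ∈ tripletLeaves T, ∀ z ∈ tripletLeaves T,
    x ≠ y → x ≠ z → y ≠ z → (x, y, z) ∈ T ∨ (x, z, y) ∈ T ∨ (y, z, x) ∈ T

/-- `S` is an SN-set of `T` with respect to the leaf set `U`: `S ⊆ U` and there is
no triplet `xy|z ∈ T` with `x, z ∈ S` and `y ∉ S`. -/
def SNSetOn (T : Set (L × L × L)) (U S : Set L) : Prop :=
  S ⊆ U ∧ ¬ ∃ x y z, (x, y, z) ∈ T ∧ x ∈ S ∧ z ∈ S ∧ y ∉ S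

/-- `S` is an SN-set of `T`. -/
def SNSet (T : Set (L × L × L)) (S : Set L) : Prop := SNSetOn T (tripletLeaves T) S

/-- `S` is a maximal SN-set: a nontrivial SN-set not strictly contained
in any nontrivial SN-set. -/
def MaxSNSet (T : Set (L × L × L)) (S : Set L) : Prop :=
  SNSet T S ∧ S ≠ tripletLeaves T ∧
    ∀ S', SNSet T S' → S' ≠ tripletLeaves T → S ⊆ S' → S' = S

/-- `S` is an SN-set maximal under the restriction of not containing `B`. -/
def MaxSNAvoid (T : Set (L × L × L)) (B S : Set L) : Prop :=
  SNSet T S ∧ ¬ B ⊆ S ∧ ∀ S', SNSet T S' → ¬ B ⊆ S' → S ⊆ S' → S' = S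

/-- `T|S`: the triplets of `T` all of whose leaves lie in `S`. -/
def restrictT (T : Set (L × L × L)) (S : Set L) : Set (L × L × L) :=
  {t ∈ T | t.1 ∈ S ∧ t.2.1 ∈ S ∧ t.2.2 ∈ S}

/-- A cut-arc: an arc whose removal disconnects the underlying undirected graph. -/
def CutArc (A : Set (V × V)) (a : V × V) : Prop :=
  a ∈ A ∧ ¬ ConnectedGraph (A \ {a})

/-- A simple network: it contains a reticulation vertex and all its cut-arcs are
trivial (i.e. end in a leaf). -/
def SimpleNet (N : PhyloNetwork V L) : Prop :=
  (∃ v, IsRetic N.arcs v) ∧ ∀ a, CutArc N.arcs a → IsLeafV N.arcs a.2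

/-- A level-`k` network: every biconnected component contains at most `k`
reticulation vertices. -/
def IsLevel (N : PhyloNetwork V L) (k : ℕ) : Prop :=
  ∀ S, BiconnComp N.arcs S → {v ∈ S | IsRetic N.arcs v}.ncard ≤ k

/-- The total number of reticulation vertices of a network. -/
noncomputable def numRetic (N : PhyloNetwork V L) : ℕ := {v | IsRetic N.arcs v}.ncard

/-- The level of a network: the smallest `k` such that it is a level-`k` network. -/
noncomputable def netLevel (N : PhyloNetwork V L) : ℕ := sInf {k | IsLevel N k}

/-- A highest cut-arc: a cut-arc not reachable from any other cut-arc. -/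
def HighestCutArc (A : Set (V × V)) (a : V × V) : Prop :=
  CutArc A a ∧ ∀ b, CutArc A b → b ≠ a → ¬ Reaches A b.2 a.1

/-- The set of leaf labels below a vertex `v`. -/
def leavesBelowV (N : PhyloNetwork V L) (v : V) : Set L :=
  {x | ∃ w, IsLeafV N.arcs w ∧ Reaches N.arcs v w ∧ N.lab w = x}

/-- An (undirected) cycle in the underlying undirected graph, as a list of at least
three distinct vertices that are consecutively adjacent, the last being adjacent
to the first. -/
def IsUCycle (A : Set (V × V)) (l : List V) : Prop :=
  3 ≤ l.length ∧ l.Nodup ∧ l.Chain' (UAdj A) ∧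
    ∃ u w, l.head? = some u ∧ l.getLast? = some w ∧ UAdj A w u

/-- A highest reticulation: a reticulation lying on a cycle through the root. -/
def HighestRetic (N : PhyloNetwork V L) (r : V) : Prop :=
  IsRetic N.arcs r ∧
    ∃ c, IsUCycle N.arcs c ∧ r ∈ c ∧ ∃ rt, IsRoot N.arcs rt ∧ rt ∈ c

/-- `BHR(N)`: the set of leaves below a highest reticulation. -/
def BHR (N : PhyloNetwork V L) : Set L :=
  {x | ∃ r, HighestRetic N r ∧ x ∈ leavesBelowV N r}

/-- The collection of sets of leaves below the highest cut-arcs of `N`. -/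
def highCutArcLeafSets (N : PhyloNetwork V L) : Set (Set L) :=
  {S | ∃ a, HighestCutArc N.arcs a ∧ S = leavesBelowV N a.2}

/-- `CutInduce(N,T)`: the induced triplet set on the sets of leaves below the
highest cut-arcs of `N`. -/
def CutInduce (N : PhyloNetwork V L) (T : Set (L × L × L)) :
    Set (Set L × Set L × Set L) :=
  {t | t.1 ∈ highCutArcLeafSets N ∧ t.2.1 ∈ highCutArcLeafSets N ∧
       t.2.2 ∈ highCutArcLeafSets N ∧
       t.1 ≠ t.2.1 ∧ t.1 ≠ t.2.2 ∧ t.2.1 ≠ t.2.2 ∧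
       ∃ x ∈ t.1, ∃ y ∈ t.2.1, ∃ z ∈ t.2.2, (x, y, z) ∈ T}

/-- `T ∇ C`: the triplet set induced by a collection `C` of leaf sets. -/
def TInduced (T : Set (L × L × L)) (C : Set (Set L)) : Set (Set L × Set L × Set L) :=
  {t | t.1 ∈ C ∧ t.2.1 ∈ C ∧ t.2.2 ∈ C ∧
       t.1 ≠ t.2.1 ∧ t.1 ≠ t.2.2 ∧ t.2.1 ≠ t.2.2 ∧
       ∃ x ∈ t.1, ∃ y ∈ t.2.1, ∃ z ∈ t.2.2, (x, y, z) ∈ T}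

/-- A label-preserving isomorphism of networks. -/
def NetIso {V₁ V₂ L : Type} (N₁ : PhyloNetwork V₁ L) (N₂ : PhyloNetwork V₂ L) : Prop :=
  ∃ e : V₁ ≃ V₂, (∀ u v : V₁, (u, v) ∈ N₁.arcs ↔ (e u, e v) ∈ N₂.arcs) ∧
    ∀ v, IsLeafV N₁.arcs v → N₂.lab (e v) = N₁.lab v

/-- A (rooted, binary) phylogenetic tree given by its arc set: acyclic, a unique
vertex of indegree 0, every vertex of indegree at most 1 and outdegree 0 or 2.
(The single-vertex tree is allowed.) -/
def IsTreeArcs (A : Set (V × V)) : Prop :=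
  Acyclic A ∧ (∃! r, indeg A r = 0) ∧ (∀ v, indeg A v ≤ 1) ∧
    ∀ v, outdeg A v = 0 ∨ outdeg A v = 2

/-- The leaf labels of a tree (leaves are the vertices of outdegree 0). -/
def treeLeafSet (A : Set (V × V)) (lab : V → L) : Set L :=
  {x | ∃ v, outdeg A v = 0 ∧ lab v = x}

/-- The triplet `xy|z` is consistent with the tree given by `A` and labelling `lab`. -/
def TreeConsistentTriplet (A : Set (V × V)) (lab : V → L) (x y z : L) : Prop :=
  ∃ a b c : V, outdeg A a = 0 ∧ outdeg A b = 0 ∧ outdeg A c = 0 ∧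
    lab a = x ∧ lab b = y ∧ lab c = z ∧ a ≠ b ∧ a ≠ c ∧ b ≠ c ∧
    ∃ p q, HasEmbedding A p q a b c

/-- A CandidateTBR SN-set: an SN-set `S` of `T` such that `T|S` is consistent with
some phylogenetic tree on the leaf set `S`. -/
def CandidateTBR (T : Set (L × L × L)) (S : Set L) : Prop :=
  SNSet T S ∧ ∃ (V : Type) (_ : Finite V) (A : Set (V × V)) (lab : V → L),
    IsTreeArcs A ∧
    (∀ u v, outdeg A u = 0 → outdeg A v = 0 → lab u = lab v → u = v) ∧
    treeLeafSet A lab = S ∧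
    ∀ t ∈ restrictT T S, TreeConsistentTriplet A lab t.1 t.2.1 t.2.2

/-- `S'` is an SN-set of `T|S` (with leaf set `S`) that is maximal under the
restriction of being a nontrivial (proper) subset of `S`. -/
def MaxProperSN (T : Set (L × L × L)) (S S' : Set L) : Prop :=
  SNSetOn (restrictT T S) S S' ∧ S' ≠ S ∧
    ∀ S'', SNSetOn (restrictT T S) S S'' → S'' ≠ S → S' ⊆ S'' → S'' = S'

/-! ### Auxiliary infrastructure for the proof of Statement 4 -/

section Infra

variable {A : Set (V × V)} {l l₁ l₂ : List V} {u v w : V}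

lemma pf_ne_nil (h : IsPathFromTo A l u v) : l ≠ [] := h.1.1

lemma pf_nodup (h : IsPathFromTo A l u v) : l.Nodup := h.1.2.1

lemma pf_chain (h : IsPathFromTo A l u v) : l.Chain' (fun a b => (a, b) ∈ A) := h.1.2.2

lemma pf_head (h : IsPathFromTo A l u v) : l.head? = some u := h.2.1

lemma pf_last (h : IsPathFromTo A l u v) : l.getLast? = some v := h.2.2

lemma pf_singleton (u : V) : IsPathFromTo A [u] u u := by
  refine ⟨⟨by simp, by simp, by simp [List.Chain']⟩, by simp, by simp⟩

lemma pf_head_mem (h : IsPathFromTo A l u v) : u ∈ l := by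
  cases l with
  | nil => exact absurd rfl (pf_ne_nil h)
  | cons a t =>
    have := pf_head h; simp at this; simp [this]

lemma pf_last_mem (h : IsPathFromTo A l u v) : v ∈ l := by
  have hv : v ∈ l.getLast? := pf_last h
  obtain ⟨h0, rfl⟩ := List.mem_getLast?_eq_getLast hv
  exact List.getLast_mem h0

lemma pf_cons (hA : (u, w) ∈ A) (h : IsPathFromTo A l w v) (hu : u ∉ l) :
    IsPathFromTo A (u :: l) u v := by
  refine ⟨⟨by simp, by simp [h.1.2.1, hu], ?_⟩, by simp, ?_⟩
  · rw [List.Chain', List.isChain_cons]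
    refine ⟨fun y hy => ?_, pf_chain h⟩
    rw [pf_head h] at hy
    simp at hy
    rw [← hy]; exact hA
  · cases l with
    | nil => exact absurd rfl (pf_ne_nil h)
    | cons a t =>
      rw [List.getLast?_cons_cons]
      exact pf_last h

lemma pf_split (h : IsPathFromTo A l u v) (hl : l = l₁ ++ w :: l₂) :
    IsPathFromTo A (l₁ ++ [w]) u w ∧ IsPathFromTo A (w :: l₂) w v := by
  subst hl
  obtain ⟨⟨hne, hnd, hch⟩, hh, hlast⟩ := h
  have hch2 := List.isChain_append.mp hch
  constructor
  · refine ⟨⟨by simp, ?_, ?_⟩, ?_, by simp⟩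
    · have h2 : ((l₁ ++ [w]) ++ l₂).Nodup := by simpa using hnd
      exact (List.nodup_append.mp h2).1
    · rw [List.Chain', List.isChain_append]
      refine ⟨hch2.1, by simp, ?_⟩
      intro x hx y hy
      simp at hy; subst hy
      exact hch2.2.2 x hx w (by simp)
    · cases l₁ with
      | nil => simp at hh ⊢; simpa using hh
      | cons a t => simpa using hh
  · refine ⟨⟨by simp, ?_, hch2.2.1⟩, by simp, ?_⟩
    · exact (List.nodup_append.mp hnd).2.1
    · rwa [List.getLast?_append_of_ne_nil _ (by simp)] at hlast

lemma exists_last_satisfying (p : V → Prop) (h : ∃ a ∈ l, p a) :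
    ∃ l₁ a l₂, l = l₁ ++ a :: l₂ ∧ p a ∧ ∀ b ∈ l₂, ¬ p b := by
  induction l using List.reverseRecOn with
  | nil => simp at h
  | append_singleton t b ih =>
    by_cases hb : p b
    · exact ⟨t, b, [], by simp, hb, by simp⟩
    · obtain ⟨a, ha, hpa⟩ := h
      simp at ha
      rcases ha with ha | ha
      · obtain ⟨t₁, a', t₂, rfl, hpa', hall⟩ := ih ⟨a, ha, hpa⟩
        refine ⟨t₁, a', t₂ ++ [b], by simp, hpa', ?_⟩
        intro c hc
        simp at hc
        rcases hc with hc | hc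
        · exact hall c hc
        · subst hc; exact hb
      · subst ha; exact absurd hpa hb

lemma pf_reaches (h : IsPathFromTo A l u v) : Reaches A u v := by
  induction l generalizing u with
  | nil => exact absurd rfl (pf_ne_nil h)
  | cons a t ih =>
    have hh := pf_head h; simp at hh; subst hh
    cases t with
    | nil =>
      have := pf_last h; simp at this; subst this; exact Relation.ReflTransGen.refl
    | cons b t' =>
      have hch := pf_chain h
      rw [List.Chain', List.isChain_cons_cons] at hch
      have hbv : IsPathFromTo A (b :: t') b v := by
        refine ⟨⟨by simp, (pf_nodup h).of_cons, hch.2⟩, by simp, ?_⟩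
        have := pf_last h; rwa [List.getLast?_cons_cons] at this
      exact Relation.ReflTransGen.head hch.1 (ih hbv)

lemma reaches_pf (h : Reaches A u v) : ∃ l, IsPathFromTo A l u v := by
  induction h using Relation.ReflTransGen.head_induction_on with
  | refl => exact ⟨[v], pf_singleton v⟩
  | head hab _ ih =>
    rename_i a b _
    obtain ⟨l, hl⟩ := ih
    by_cases ha : a ∈ l
    · obtain ⟨s, t, rfl⟩ := List.append_of_mem ha
      exact ⟨a :: t, (pf_split hl rfl).2⟩
    · exact ⟨a :: l, pf_cons hab hl ha⟩

lemma pf_mem_split (h : IsPathFromTo A l u v) (hw : w ∈ l) :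
    ∃ l₁ l₂, l = l₁ ++ w :: l₂ ∧ IsPathFromTo A (l₁ ++ [w]) u w ∧ IsPathFromTo A (w :: l₂) w v := by
  obtain ⟨s, t, rfl⟩ := List.append_of_mem hw
  exact ⟨s, t, rfl, pf_split h rfl⟩

lemma pf_mem_reaches (h : IsPathFromTo A l u v) (hw : w ∈ l) :
    Reaches A u w ∧ Reaches A w v := by
  obtain ⟨l₁, l₂, _, h1, h2⟩ := pf_mem_split h hw
  exact ⟨pf_reaches h1, pf_reaches h2⟩

lemma reaches_antisymm (hA : Acyclic A) (h1 : Reaches A u v) (h2 : Reaches A v u) : u = v := by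
  cases (Relation.reflTransGen_iff_eq_or_transGen.mp h1) with
  | inl h => exact h.symm
  | inr h =>
    obtain ⟨b, hub, hbv⟩ := Relation.TransGen.tail'_iff.mp h
    exact absurd (h2.trans hub) (hA b v hbv)

lemma pf_splice (h1 : IsPathFromTo A l₁ u w) (h2 : IsPathFromTo A l₂ w v)
    (hmeet : ∀ a ∈ l₁, a ∈ l₂ → a = w) :
    IsPathFromTo A (l₁ ++ l₂.tail) u v := by
  cases l₂ with
  | nil => exact absurd rfl (pf_ne_nil h2)
  | cons b t =>
    have hb : b = w := by have := pf_head h2; simpa using this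
    subst hb
    refine ⟨⟨by simp [pf_ne_nil h1], ?_, ?_⟩, ?_, ?_⟩
    · rw [List.nodup_append]
      refine ⟨pf_nodup h1, (pf_nodup h2).of_cons, ?_⟩
      intro a ha b hat hab
      subst hab
      simp only [List.tail_cons] at hat
      have := hmeet a ha (List.mem_cons.mpr (Or.inr hat))
      subst this
      exact absurd hat (by have := pf_nodup h2; simp at this; exact this.1)
    · rw [List.Chain', List.isChain_append]
      refine ⟨pf_chain h1, (pf_chain h2).tail, ?_⟩
      intro x hx y hy
      rw [pf_last h1] at hx
      simp at hx; subst hx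
      have hch := pf_chain h2
      cases t with
      | nil => simp at hy
      | cons c t' =>
        simp at hy; subst hy
        rw [List.Chain', List.isChain_cons_cons] at hch
        exact hch.1
    · cases l₁ with
      | nil => exact absurd rfl (pf_ne_nil h1)
      | cons a s => simpa using pf_head h1
    · cases t with
      | nil =>
        simp
        have := pf_last h2; simp at this; subst this
        exact pf_last h1
      | cons c t' =>
        rw [List.getLast?_append_of_ne_nil _ (by simp)]
        have := pf_last h2
        rwa [List.getLast?_cons_cons] at this

lemma pf_append_arc {α β : V} (h1 : IsPathFromTo A l₁ u α) (hab : (α, β) ∈ A)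
    (h2 : IsPathFromTo A l₂ β v) (hdisj : ∀ a ∈ l₁, a ∉ l₂) :
    IsPathFromTo A (l₁ ++ l₂) u v := by
  refine ⟨⟨by simp [pf_ne_nil h1], ?_, ?_⟩, ?_, ?_⟩
  · rw [List.nodup_append]
    exact ⟨pf_nodup h1, pf_nodup h2, fun a ha b hb hab => hdisj a ha (hab ▸ hb)⟩
  · rw [List.Chain', List.isChain_append]
    refine ⟨pf_chain h1, pf_chain h2, ?_⟩
    intro x hx y hy
    rw [pf_last h1] at hx; rw [pf_head h2] at hy
    simp at hx hy; subst hx; subst hy; exact hab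
  · cases l₁ with
    | nil => exact absurd rfl (pf_ne_nil h1)
    | cons a s => simpa using pf_head h1
  · rw [List.getLast?_append_of_ne_nil _ (pf_ne_nil h2)]
    exact pf_last h2

end Infra

section NetBasics

variable {A : Set (V × V)} {u v w : V}

lemma outdeg_ne_zero_iff [Finite V] : outdeg A v ≠ 0 ↔ ∃ w, (v, w) ∈ A := by
  rw [outdeg, Ne, Set.ncard_eq_zero (Set.toFinite _)]
  simp [Set.eq_empty_iff_forall_notMem]

lemma indeg_ne_zero_iff [Finite V] : indeg A v ≠ 0 ↔ ∃ u, (u, v) ∈ A := by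
  rw [indeg, Ne, Set.ncard_eq_zero (Set.toFinite _)]
  simp [Set.eq_empty_iff_forall_notMem]

lemma indeg_one_unique (h : indeg A v = 1) : ∃ p, (p, v) ∈ A ∧ ∀ q, (q, v) ∈ A → q = p := by
  rw [indeg, Set.ncard_eq_one] at h
  obtain ⟨p, hp⟩ := h
  refine ⟨p, ?_, ?_⟩
  · have : p ∈ {u | (u, v) ∈ A} := by rw [hp]; rfl
    exact this
  · intro q hq
    have : q ∈ ({p} : Set V) := hp ▸ hq
    simpa using this

lemma outdeg_one_unique (h : outdeg A v = 1) : ∃ c, (v, c) ∈ A ∧ ∀ d, (v, d) ∈ A → d = c := by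
  rw [outdeg, Set.ncard_eq_one] at h
  obtain ⟨c, hc⟩ := h
  refine ⟨c, ?_, ?_⟩
  · have : c ∈ {w | (v, w) ∈ A} := by rw [hc]; rfl
    exact this
  · intro d hd
    have : d ∈ ({c} : Set V) := hc ▸ hd
    simpa using this

lemma three_le_outdeg [Finite V] {a b c : V} (ha : (v, a) ∈ A) (hb : (v, b) ∈ A)
    (hc : (v, c) ∈ A) (hab : a ≠ b) (hac : a ≠ c) (hbc : b ≠ c) : 3 ≤ outdeg A v := by
  have hsub : ({a, b, c} : Set V) ⊆ {w | (v, w) ∈ A} := by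
    intro x hx
    rcases hx with rfl | rfl | rfl <;> assumption
  have h3 : ({a, b, c} : Set V).ncard = 3 := by
    rw [Set.ncard_insert_of_notMem (by simp [hab, hac]) (Set.toFinite _),
      Set.ncard_insert_of_notMem (by simp [hbc]) (Set.toFinite _), Set.ncard_singleton]
  calc 3 = ({a, b, c} : Set V).ncard := h3.symm
    _ ≤ _ := Set.ncard_le_ncard hsub (Set.toFinite _)

lemma reflTransGen_swap_reaches (h : Relation.ReflTransGen (fun x y => (y, x) ∈ A) u v) :
    Reaches A v u := by
  induction h with
  | refl => exact Relation.ReflTransGen.refl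
  | tail _ hbc ih => exact Relation.ReflTransGen.head hbc ih

lemma wf_child [Finite V] (hA : Acyclic A) : WellFounded (fun a b : V => (b, a) ∈ A) := by
  haveI h1 : IsTrans V (Relation.TransGen fun a b : V => (b, a) ∈ A) :=
    ⟨fun a b c h1 h2 => h1.trans h2⟩
  haveI h2 : IsIrrefl V (Relation.TransGen fun a b : V => (b, a) ∈ A) := by
    constructor
    intro a ha
    obtain ⟨b, hab, hba⟩ := Relation.TransGen.tail'_iff.mp ha
    exact hA a b hba (reflTransGen_swap_reaches hab)
  exact Subrelation.wf (fun h => Relation.TransGen.single h)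
    (@Finite.wellFounded_of_trans_of_irrefl _ _ _ h1 h2)

lemma reflTransGen_swap_reaches' (h : Relation.ReflTransGen (fun x y : V => (x, y) ∈ A) u v) :
    Reaches A u v := h

lemma wf_parent [Finite V] (hA : Acyclic A) : WellFounded (fun a b : V => (a, b) ∈ A) := by
  haveI h1 : IsTrans V (Relation.TransGen fun a b : V => (a, b) ∈ A) :=
    ⟨fun a b c h1 h2 => h1.trans h2⟩
  haveI h2 : IsIrrefl V (Relation.TransGen fun a b : V => (a, b) ∈ A) := by
    constructor
    intro a ha
    obtain ⟨b, hab, hba⟩ := Relation.TransGen.tail'_iff.mp ha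
    exact hA b a hba hab
  exact Subrelation.wf (fun h => Relation.TransGen.single h)
    (@Finite.wellFounded_of_trans_of_irrefl _ _ _ h1 h2)

variable (N : PhyloNetwork V L)

lemma net_outdeg_le_two (v : V) : outdeg N.arcs v ≤ 2 := by
  rcases N.vertex_type v with h | h | h | h
  · rw [h.2]
  · rw [h.2]
  · rw [h.2]; omega
  · rw [h.2]; omega

lemma net_sink_leaf {v : V} (h : outdeg N.arcs v = 0) : IsLeafV N.arcs v := by
  rcases N.vertex_type v with h' | h' | h' | h'
  · rw [h'.2] at h; omega
  · rw [h'.2] at h; omega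
  · rw [h'.2] at h; omega
  · exact h'

lemma net_nonsink_pos {v : V} (h : ¬ IsLeafV N.arcs v) : outdeg N.arcs v ≠ 0 :=
  fun h0 => h (net_sink_leaf N h0)

lemma net_reaches_leaf : ∀ v : V, ∃ w, IsLeafV N.arcs w ∧ Reaches N.arcs v w := by
  haveI := N.vfin
  intro v
  induction v using (wf_child N.acyclic).induction with
  | _ v ih =>
    by_cases h0 : outdeg N.arcs v = 0
    · exact ⟨v, net_sink_leaf N h0, Relation.ReflTransGen.refl⟩
    · obtain ⟨c, hc⟩ := (outdeg_ne_zero_iff).mp h0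
      obtain ⟨w, hw, hr⟩ := ih c hc
      exact ⟨w, hw, Relation.ReflTransGen.head hc hr⟩

lemma net_root_reaches {ρ : V} (hρ : IsRoot N.arcs ρ) : ∀ v : V, Reaches N.arcs ρ v := by
  haveI := N.vfin
  intro v
  induction v using (wf_parent N.acyclic).induction with
  | _ v ih =>
    by_cases h0 : indeg N.arcs v = 0
    · have hroot : IsRoot N.arcs v := by
        rcases N.vertex_type v with h' | h' | h' | h'
        · exact h'
        · rw [h'.1] at h0; omega
        · rw [h'.1] at h0; omega
        · rw [h'.1] at h0; omega
      rw [N.root_unique ρ v hρ hroot]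
      exact Relation.ReflTransGen.refl
    · obtain ⟨p, hp⟩ := (indeg_ne_zero_iff).mp h0
      exact (ih p hp).tail hp

/-- The number of (weak) descendants of a vertex. -/
noncomputable def descNum (A : Set (V × V)) (v : V) : ℕ := {u | Reaches A v u}.ncard

lemma descNum_lt [Finite V] (hA : Acyclic A) (h : Reaches A v w) (hne : w ≠ v) :
    descNum A w < descNum A v := by
  apply Set.ncard_lt_ncard _ (Set.toFinite _)
  constructor
  · intro x hx
    exact h.trans hx
  · intro hsub
    have hv : v ∈ {u | Reaches A w u} := hsub Relation.ReflTransGen.refl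
    exact hne (reaches_antisymm hA hv h)

end NetBasics

section Helpers

variable {A : Set (V × V)} {l : List V} {u v w : V}

lemma sink_reaches_eq [Finite V] (h0 : outdeg A v = 0) (h : Reaches A v w) : w = v := by
  cases (Relation.reflTransGen_iff_eq_or_transGen.mp h) with
  | inl h => exact h
  | inr h =>
    obtain ⟨b, hb⟩ := Relation.TransGen.head'_iff.mp h
    exfalso
    exact (outdeg_ne_zero_iff.mpr ⟨b, hb.1⟩) h0

lemma pf_second (h : IsPathFromTo A l u v) (hne : u ≠ v) :
    ∃ w t, l = u :: w :: t ∧ (u, w) ∈ A ∧ IsPathFromTo A (w :: t) w v := by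
  cases l with
  | nil => exact absurd rfl (pf_ne_nil h)
  | cons a t =>
    have ha := pf_head h; simp at ha; subst ha
    cases t with
    | nil =>
      have := pf_last h; simp at this
      exact absurd this hne
    | cons b t' =>
      have hch := pf_chain h
      rw [List.Chain', List.isChain_cons_cons] at hch
      refine ⟨b, t', rfl, hch.1, ⟨⟨by simp, (pf_nodup h).of_cons, hch.2⟩, by simp, ?_⟩⟩
      have := pf_last h
      rwa [List.getLast?_cons_cons] at this

lemma endpoint_head (h : l.head? = some w) : IsEndpoint l w := Or.inl h

lemma endpoint_last (h : l.getLast? = some w) : IsEndpoint l w := Or.inr h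

end Helpers

section ForkKiller

variable {N : PhyloNetwork V L} {S : Set L}

/-- The set of "good" leaf targets: leaves whose label is in `S`. -/
def GoodLeaf (N : PhyloNetwork V L) (S : Set L) (v : V) : Prop :=
  IsLeafV N.arcs v ∧ N.lab v ∈ S

/-- `v` only has leaves with labels in `S` below it. -/
def GoodV (N : PhyloNetwork V L) (S : Set L) (v : V) : Prop :=
  ∀ w, IsLeafV N.arcs w → Reaches N.arcs v w → N.lab w ∈ S

lemma fork_killer_aux (hS : SNSet (TN N) S)
    {π s₁ s₂ y' u : V} {L₁ L₂ Ry2 : List V}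
    (hL₁ : IsPathFromTo N.arcs L₁ π s₁) (hL₂ : IsPathFromTo N.arcs L₂ π s₂)
    (hg₁ : GoodLeaf N S s₁) (hg₂ : GoodLeaf N S s₂)
    (hy' : IsLeafV N.arcs y') (hylab : N.lab y' ∉ S)
    (hmeet : ∀ a ∈ L₁, a ∈ L₂ → a = π)
    (hRy2 : IsPathFromTo N.arcs Ry2 u y')
    (hR1 : ∀ a ∈ Ry2, a ∈ L₁ → a = u)
    (hR2 : ∀ a ∈ Ry2, a ∈ L₂ → a = u)
    (huL₁ : u ∈ L₁) (huπ : u ≠ π) : False := by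
  haveI := N.vfin
  -- u ≠ s₁
  have hus₁ : u ≠ s₁ := by
    intro h
    have h2 : y' = s₁ := sink_reaches_eq hg₁.1.2 (h ▸ pf_reaches hRy2)
    exact hylab (by rw [h2]; exact hg₁.2)
  -- π ∉ tail of L₁-pieces
  obtain ⟨a₁, a₂, hsplit, hPre, hSuf⟩ := pf_mem_split hL₁ huL₁
  have ha₁ne : a₁ ≠ [] := by
    rintro rfl
    simp at hsplit
    rw [hsplit] at hL₁
    have := pf_head hL₁; simp at this
    exact huπ this
  have hπa₁ : π ∈ a₁ := by
    have := pf_head hL₁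
    rw [hsplit] at this
    cases a₁ with
    | nil => exact absurd rfl ha₁ne
    | cons x t => simp at this; simp [this]
  have hπnotSuf : π ∉ u :: a₂ := by
    intro hmem
    have hnd := pf_nodup hL₁
    rw [hsplit, List.nodup_append] at hnd
    exact hnd.2.2 _ hπa₁ _ hmem rfl
  -- s₁ ≠ s₂
  have hs12 : s₁ ≠ s₂ := by
    intro h
    have h2 : s₁ ∈ L₂ := h ▸ pf_last_mem hL₂
    have hππ := hmeet s₁ (pf_last_mem hL₁) h2
    have hr := (pf_mem_reaches hL₁ huL₁).1
    have hsink : outdeg N.arcs π = 0 := by rw [← hππ]; exact hg₁.1.2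
    exact huπ (sink_reaches_eq hsink hr)
  have hy's₁ : y' ≠ s₁ := fun h => hylab (h ▸ hg₁.2)
  have hy's₂ : y' ≠ s₂ := fun h => hylab (h ▸ hg₂.2)
  have huL₂ : u ∉ L₂ := fun h => huπ (hmeet u huL₁ h)
  -- the four paths of the embedding
  have hPqx : IsPathFromTo N.arcs (u :: a₂) u s₁ := hSuf
  have hPpq : IsPathFromTo N.arcs (a₁ ++ [u]) π u := hPre
  -- memberships
  have hmemL₁pre : ∀ a ∈ a₁ ++ [u], a ∈ L₁ := by
    intro a ha
    rw [hsplit]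
    simp at ha ⊢
    rcases ha with ha | ha
    · exact Or.inl ha
    · exact Or.inr (Or.inl ha)
  have hmemL₁suf : ∀ a ∈ u :: a₂, a ∈ L₁ := by
    intro a ha
    rw [hsplit]
    simp at ha ⊢
    tauto
  have hnodupL₁ := pf_nodup hL₁
  rw [hsplit] at hnodupL₁
  -- construct the embedding
  have hemb : HasEmbedding N.arcs π u s₁ y' s₂ := by
    refine ⟨Ne.symm huπ, u :: a₂, Ry2, a₁ ++ [u], L₂, hPqx, hRy2, hPpq, hL₂, ?_, ?_, ?_, ?_, ?_, ?_⟩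
    · -- Pqx vs Pqy = (u::a₂) vs Ry2
      intro w hw1 hw2
      have : w = u := hR1 w hw2 (hmemL₁suf w hw1)
      subst this
      exact ⟨endpoint_head (pf_head hPqx), endpoint_head (pf_head hRy2)⟩
    · -- Pqx vs Ppq
      intro w hw1 hw2
      have hwu : w = u := by
        simp at hw2
        rcases hw2 with hw2 | hw2
        · exfalso
          have hnd := hnodupL₁
          rw [List.nodup_append] at hnd
          exact hnd.2.2 _ hw2 _ hw1 rfl
        · exact hw2
      subst hwu
      exact ⟨endpoint_head (pf_head hPqx), endpoint_last (pf_last hPpq)⟩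
    · -- Pqx vs Ppz = L₂
      intro w hw1 hw2
      exfalso
      have := hmeet w (hmemL₁suf w hw1) hw2
      subst this
      exact hπnotSuf hw1
    · -- Pqy = Ry2 vs Ppq
      intro w hw1 hw2
      have : w = u := hR1 w hw1 (hmemL₁pre w hw2)
      subst this
      exact ⟨endpoint_head (pf_head hRy2), endpoint_last (pf_last hPpq)⟩
    · -- Pqy vs Ppz = L₂
      intro w hw1 hw2
      exfalso
      have : w = u := hR2 w hw1 hw2
      subst this
      exact huL₂ hw2
    · -- Ppq vs Ppz
      intro w hw1 hw2
      have : w = π := hmeet w (hmemL₁pre w hw1) hw2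
      subst this
      refine ⟨endpoint_head ?_, endpoint_head (pf_head hL₂)⟩
      have := pf_head hPpq
      exact this
  -- now build the forbidden triplet
  have hcons : ConsistentT N (N.lab s₁) (N.lab y') (N.lab s₂) :=
    ⟨s₁, y', s₂, hg₁.1, hy', hg₂.1, rfl, rfl, rfl,
      fun h => hy's₁ h.symm, hs12, hy's₂, π, u, hemb⟩
  exact hS.2 ⟨N.lab s₁, N.lab y', N.lab s₂, hcons, hg₁.2, hg₂.2, hylab⟩

/-- The fork killer: a vertex that reaches a leaf outside `S` cannot have two
internally disjoint paths to leaves with labels in `S`. -/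
lemma fork_killer (hS : SNSet (TN N) S)
    {π s₁ s₂ y' : V} {L₁ L₂ : List V}
    (hL₁ : IsPathFromTo N.arcs L₁ π s₁) (hL₂ : IsPathFromTo N.arcs L₂ π s₂)
    (hg₁ : GoodLeaf N S s₁) (hg₂ : GoodLeaf N S s₂)
    (hy' : IsLeafV N.arcs y') (hylab : N.lab y' ∉ S) (hreach : Reaches N.arcs π y')
    (hmeet : ∀ a ∈ L₁, a ∈ L₂ → a = π) : False := by
  haveI := N.vfin
  obtain ⟨Ry, hRy⟩ := reaches_pf hreach
  obtain ⟨r₁, u, r₂, hRsplit, hu, hr₂⟩ :=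
    exists_last_satisfying (fun a => a ∈ L₁ ∨ a ∈ L₂)
      ⟨π, pf_head_mem hRy, Or.inl (pf_head_mem hL₁)⟩ (l := Ry)
  have hRy2 : IsPathFromTo N.arcs (u :: r₂) u y' := (pf_split hRy hRsplit).2
  have hR1 : ∀ a ∈ u :: r₂, a ∈ L₁ → a = u := by
    intro a ha haL
    rcases List.mem_cons.mp ha with h | h
    · exact h
    · exact absurd (Or.inl haL) (hr₂ a h)
  have hR2 : ∀ a ∈ u :: r₂, a ∈ L₂ → a = u := by
    intro a ha haL
    rcases List.mem_cons.mp ha with h | h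
    · exact h
    · exact absurd (Or.inr haL) (hr₂ a h)
  by_cases huπ : u = π
  · subst huπ
    -- three disjoint legs from u: to s₁, s₂, y'; outdegree contradiction
    have hπs₁ : u ≠ s₁ := by
      intro h
      have h2 : y' = u := sink_reaches_eq (h ▸ hg₁.1.2) hreach
      exact hylab (by rw [← h2] at h; rw [h]; exact hg₁.2)
    have hπs₂ : u ≠ s₂ := by
      intro h
      have h2 : y' = u := sink_reaches_eq (h ▸ hg₂.1.2) hreach
      exact hylab (by rw [← h2] at h; rw [h]; exact hg₂.2)
    have hπy' : u ≠ y' := by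
      intro h
      have h2 : s₁ = u := sink_reaches_eq (h ▸ hy'.2) (pf_reaches hL₁)
      exact hylab (by rw [← h] ; rw [← h2]; exact hg₁.2)
    obtain ⟨w₁, t₁, hsp₁, harc₁, _⟩ := pf_second hL₁ hπs₁
    obtain ⟨w₂, t₂, hsp₂, harc₂, _⟩ := pf_second hL₂ hπs₂
    obtain ⟨w₃, t₃, hsp₃, harc₃, _⟩ := pf_second hRy2 hπy'
    have hw₁π : w₁ ≠ u := by
      have := pf_nodup hL₁; rw [hsp₁] at this; simp at this
      exact fun h => this.1.1 h.symm
    have hw₂π : w₂ ≠ u := by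
      have := pf_nodup hL₂; rw [hsp₂] at this; simp at this
      exact fun h => this.1.1 h.symm
    have hw₃π : w₃ ≠ u := by
      have := pf_nodup hRy2; rw [hsp₃] at this; simp at this
      exact fun h => this.1.1 h.symm
    have hw₁L : w₁ ∈ L₁ := by rw [hsp₁]; simp
    have hw₂L : w₂ ∈ L₂ := by rw [hsp₂]; simp
    have hw₃R : w₃ ∈ u :: r₂ := by rw [hsp₃]; simp
    have h12 : w₁ ≠ w₂ := fun h => hw₁π (hmeet w₁ hw₁L (h ▸ hw₂L))
    have h13 : w₁ ≠ w₃ := fun h => hw₃π (hR1 w₃ hw₃R (h ▸ hw₁L))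
    have h23 : w₂ ≠ w₃ := fun h => hw₃π (hR2 w₃ hw₃R (h ▸ hw₂L))
    have h3 := three_le_outdeg harc₁ harc₂ harc₃ h12 h13 h23
    have h2 := net_outdeg_le_two N u
    omega
  · rcases hu with hu | hu
    · exact fork_killer_aux hS hL₁ hL₂ hg₁ hg₂ hy' hylab hmeet hRy2 hR1 hR2 hu huπ
    · exact fork_killer_aux hS hL₂ hL₁ hg₂ hg₁ hy' hylab
        (fun a h2 h1 => hmeet a h1 h2) hRy2 hR2 hR1 hu huπ

end ForkKiller

section Menger

variable {A : Set (V × V)} {T : Set V} {l : List V} {u v w : V}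

/-- A path from `v` to some sink of `T`. -/
def TPath (A : Set (V × V)) (T : Set V) (v : V) (l : List V) : Prop :=
  ∃ t ∈ T, IsPathFromTo A l v t

/-- A `T`-path whose second vertex is `c`. -/
def ViaP (A : Set (V × V)) (T : Set V) (v c : V) (l : List V) : Prop :=
  TPath A T v l ∧ l.tail.head? = some c

/-- No two `T`-paths from `v` that meet only at `v`. -/
def NoTwoDisj (A : Set (V × V)) (T : Set V) (v : V) : Prop :=
  ∀ l₁ l₂, TPath A T v l₁ → TPath A T v l₂ → (∀ a ∈ l₁, a ∈ l₂ → a = v) → False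

lemma exists_first_satisfying (p : V → Prop) (h : ∃ a ∈ l, p a) :
    ∃ l₁ a l₂, l = l₁ ++ a :: l₂ ∧ p a ∧ ∀ b ∈ l₁, ¬ p b := by
  induction l with
  | nil => simp at h
  | cons x t ih =>
    by_cases hx : p x
    · exact ⟨[], x, t, by simp, hx, by simp⟩
    · obtain ⟨a, ha, hpa⟩ := h
      simp at ha
      rcases ha with ha | ha
      · subst ha; exact absurd hpa hx
      · obtain ⟨t₁, a', t₂, rfl, hpa', hall⟩ := ih ⟨a, ha, hpa⟩
        refine ⟨x :: t₁, a', t₂, by simp, hpa', ?_⟩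
        intro b hb
        simp at hb
        rcases hb with hb | hb
        · subst hb; exact hx
        · exact hall b hb

lemma head?_append_cons_congr (xs ys zs : List V) (m : V) :
    (xs ++ m :: ys).head? = (xs ++ m :: zs).head? := by
  cases xs <;> simp

lemma head_not_mem_suffix {l₁ l₂ : List V} {m : V} (h : IsPathFromTo A l u v)
    (hl : l = l₁ ++ m :: l₂) (hm : m ≠ u) : u ∉ m :: l₂ := by
  have hnd := pf_nodup h
  rw [hl] at hnd
  rw [List.nodup_append] at hnd
  have hu : u ∈ l₁ := by
    have hh := pf_head h
    rw [hl] at hh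
    cases l₁ with
    | nil => simp at hh; exact absurd hh hm
    | cons a s => simp at hh; simp [hh]
  exact fun hmem => hnd.2.2 _ hu _ hmem rfl

lemma mem_of_splice {l₁ l₂ : List V} (ha : u ∈ l₁ ++ l₂.tail) : u ∈ l₁ ∨ u ∈ l₂ := by
  rcases List.mem_append.mp ha with h | h
  · exact Or.inl h
  · exact Or.inr (List.mem_of_mem_tail h)

lemma second_mem {c : V} (h : l.tail.head? = some c) : c ∈ l := by
  cases l with
  | nil => simp at h
  | cons a t =>
    simp at h
    cases t with
    | nil => simp at h
    | cons b t' => simp at h; simp [h]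

lemma menger_pair_contra (hA : Acyclic A) [Finite V]
    {v₀ w μ : V} {Zwpre R Q₁ Q₂ ρ₁ ρ₂ : List V}
    (hH2 : NoTwoDisj A T v₀) (hwv : w ≠ v₀)
    (hZwpre : IsPathFromTo A Zwpre v₀ w)
    (hZR : ∀ a ∈ Zwpre, a ∈ R → a = v₀)
    (hR : TPath A T v₀ R) (hwR : w ∉ R)
    (hQ₁ : TPath A T w Q₁) (hQ₂ : TPath A T w Q₂)
    (hQmeet : ∀ a ∈ Q₁, a ∈ Q₂ → a = w)
    (hμR : R = ρ₁ ++ μ :: ρ₂) (hμQ : μ ∈ Q₁)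
    (hρ₁ : ∀ b ∈ ρ₁, b ∉ Q₁ ∧ b ∉ Q₂) : False := by
  obtain ⟨t₁, ht₁, hQ₁p⟩ := hQ₁
  obtain ⟨t₂, ht₂, hQ₂p⟩ := hQ₂
  obtain ⟨tR, htR, hRp⟩ := hR
  have hμw : μ ≠ w := fun h => hwR (h ▸ (hμR ▸ (by simp : μ ∈ ρ₁ ++ μ :: ρ₂)))
  have hv₀Q₁ : v₀ ∉ Q₁ := by
    intro h
    exact absurd (reaches_antisymm hA ((pf_mem_reaches hQ₁p h).1) (pf_reaches hZwpre)) hwv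
  have hv₀Q₂ : v₀ ∉ Q₂ := by
    intro h
    exact absurd (reaches_antisymm hA ((pf_mem_reaches hQ₂p h).1) (pf_reaches hZwpre)) hwv
  -- split Q₁ at μ
  obtain ⟨σ₁, σ₂, hQ₁split, hQ₁pre, hQ₁suf⟩ := pf_mem_split hQ₁p hμQ
  have hwσ₂ : w ∉ μ :: σ₂ := head_not_mem_suffix hQ₁p hQ₁split hμw
  -- R prefix
  have hRpre : IsPathFromTo A (ρ₁ ++ [μ]) v₀ μ := (pf_split hRp hμR).1
  -- B path
  have hB : IsPathFromTo A ((ρ₁ ++ [μ]) ++ (μ :: σ₂).tail) v₀ t₁ := by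
    apply pf_splice hRpre hQ₁suf
    intro a ha hmem
    simp at ha
    rcases ha with ha | ha
    · exfalso
      have : a ∈ Q₁ := by rw [hQ₁split]; simp at hmem ⊢; tauto
      exact (hρ₁ a ha).1 this
    · exact ha
  -- A path
  have hAmeet : ∀ a ∈ Zwpre, a ∈ Q₂ → a = w := by
    intro a ha hq
    exact reaches_antisymm hA ((pf_mem_reaches hZwpre ha).2) ((pf_mem_reaches hQ₂p hq).1)
  have hA' : IsPathFromTo A (Zwpre ++ Q₂.tail) v₀ t₂ := pf_splice hZwpre hQ₂p hAmeet
  -- apply H2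
  apply hH2 _ _ ⟨t₂, ht₂, hA'⟩ ⟨t₁, ht₁, hB⟩
  intro a ha hb
  rcases mem_of_splice ha with haZ | haQ₂
  · rcases mem_of_splice hb with haR | haQ₁suf
    · -- a ∈ Zwpre, a ∈ ρ₁ ++ [μ]
      simp at haR
      rcases haR with haR | haR
      · exact hZR a haZ (by rw [hμR]; simp [haR])
      · subst haR
        exfalso
        have : a = w := reaches_antisymm hA ((pf_mem_reaches hZwpre haZ).2)
          ((pf_mem_reaches hQ₁p hμQ).1)
        exact hμw this
    · -- a ∈ Zwpre, a ∈ μ :: σ₂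
      exfalso
      have haQ₁ : a ∈ Q₁ := by rw [hQ₁split]; simp at haQ₁suf ⊢; tauto
      have : a = w := reaches_antisymm hA ((pf_mem_reaches hZwpre haZ).2)
        ((pf_mem_reaches hQ₁p haQ₁).1)
      subst this
      exact hwσ₂ haQ₁suf
  · -- a ∈ Q₂.tail
    have haQ₂' : a ∈ Q₂ := haQ₂
    rcases mem_of_splice hb with haR | haQ₁suf
    · exfalso
      simp at haR
      rcases haR with haR | haR
      · exact (hρ₁ a haR).2 haQ₂'
      · subst haR
        have : a = w := hQmeet a hμQ haQ₂'
        exact hμw this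
    · exfalso
      have haQ₁ : a ∈ Q₁ := by rw [hQ₁split]; simp at haQ₁suf ⊢; tauto
      have : a = w := hQmeet a haQ₁ haQ₂'
      subst this
      exact hwσ₂ haQ₁suf

lemma pf_eq_singleton (h : IsPathFromTo A l u u) : l = [u] := by
  cases l with
  | nil => exact absurd rfl (pf_ne_nil h)
  | cons a t =>
    have ha := pf_head h; simp at ha; subst ha
    cases t with
    | nil => rfl
    | cons b t' =>
      exfalso
      have hl := pf_last h
      rw [List.getLast?_cons_cons] at hl
      have : a ∈ b :: t' := by
        have hv : a ∈ (b :: t').getLast? := hl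
        obtain ⟨h0, h1⟩ := List.mem_getLast?_eq_getLast hv
        rw [h1]; exact List.getLast_mem h0
      have hnd := pf_nodup h
      exact (List.nodup_cons.mp hnd).1 this

lemma tail_head?_append_cons_congr {xs ys zs : List V} {m : V} (hne : xs ≠ []) :
    (xs ++ m :: ys).tail.head? = (xs ++ m :: zs).tail.head? := by
  cases xs with
  | nil => exact absurd rfl hne
  | cons a t =>
    simp only [List.cons_append, List.tail_cons]
    exact head?_append_cons_congr t ys zs m

/-- The core Menger-type loop: if `w` lies on every `T`-path from `v₀` whose second
vertex is `c₁`, then (under the no-two-disjoint-paths hypothesis) there is a vertex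
`z ≠ v₀` lying on every `T`-path from `v₀`. -/
lemma menger_loop (hA : Acyclic A) [Finite V] :
    ∀ n : ℕ, ∀ v₀ c₁ w : V, descNum A w ≤ n →
      (v₀, c₁) ∈ A →
      (∃ l, ViaP A T v₀ c₁ l) →
      (∀ l, ViaP A T v₀ c₁ l → w ∈ l) →
      w ≠ v₀ →
      NoTwoDisj A T v₀ →
      ∃ z, z ≠ v₀ ∧ ∀ l, TPath A T v₀ l → z ∈ l := by
  intro n
  induction n using Nat.strong_induction_on with
  | _ n IH =>
  intro v₀ c₁ w hn harc hex hcut hwv hH2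
  by_cases hall : ∀ l, TPath A T v₀ l → w ∈ l
  · exact ⟨w, hwv, hall⟩
  push_neg at hall
  obtain ⟨R, hRT, hwR⟩ := hall
  obtain ⟨tR, htR, hRp⟩ := hRT
  obtain ⟨Z, hZvia⟩ := hex
  have hwZ : w ∈ Z := hcut Z hZvia
  obtain ⟨hZT, hZ2⟩ := hZvia
  obtain ⟨tZ, htZ, hZp⟩ := hZT
  -- find the first contact of Z with R (other than v₀)
  have hcontact : ∃ a ∈ Z, a ∈ R ∧ a ≠ v₀ := by
    by_contra hno
    push_neg at hno
    exact hH2 Z R ⟨tZ, htZ, hZp⟩ ⟨tR, htR, hRp⟩ (fun a ha har => hno a ha har)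
  obtain ⟨b₁, m, b₂, hbsplit, hm, hfirst⟩ :=
    exists_first_satisfying (fun a => a ∈ R ∧ a ≠ v₀) hcontact
  have hmw : m ≠ w := fun h => hwR (h ▸ hm.1)
  have hmv₀ : m ≠ v₀ := hm.2
  have hb₁ne : b₁ ≠ [] := by
    rintro rfl
    simp at hbsplit
    rw [hbsplit] at hZp
    have := pf_head hZp; simp at this
    exact hmv₀ this
  -- split R at m
  obtain ⟨r₁, r₂, hRsplit, hRpre, hRsuf⟩ := pf_mem_split hRp hm.1
  have hv₀r₂ : v₀ ∉ m :: r₂ := head_not_mem_suffix hRp hRsplit hmv₀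
  have hZnd := pf_nodup hZp
  by_cases hwb : w ∈ b₁
  · -- the main case: w is before the first contact
    obtain ⟨w₁, w₂, hb₁split⟩ := List.append_of_mem hwb
    have hZw : Z = w₁ ++ w :: (w₂ ++ m :: b₂) := by
      rw [hbsplit, hb₁split]; simp
    obtain ⟨hZwpre, hZwsuf⟩ := pf_split hZp hZw
    have hZR : ∀ a ∈ w₁ ++ [w], a ∈ R → a = v₀ := by
      intro a ha haR
      by_contra hane
      simp at ha
      rcases ha with ha | ha
      · exact hfirst a (by rw [hb₁split]; simp [ha]) ⟨haR, hane⟩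
      · exact hwR (ha ▸ haR)
    -- w ≠ tZ
    have hwtZ : w ≠ tZ := by
      intro h
      have hcopy := hZwsuf
      rw [← h] at hcopy
      have h2 := pf_eq_singleton hcopy
      simp at h2
    by_cases hH2w : NoTwoDisj A T w
    · -- recurse: get a cut vertex for w, then recurse with it
      obtain ⟨d, t, hsufsplit, harcwd, hdp⟩ := pf_second hZwsuf hwtZ
      have hdw : d ≠ w := by
        intro h
        exact hA w d harcwd (h ▸ Relation.ReflTransGen.refl)
      have hdlt : descNum A d < descNum A w :=
        descNum_lt hA (Relation.ReflTransGen.single harcwd) hdw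
      have hZwsuf' : IsPathFromTo A (w :: d :: t) w tZ := by rw [← hsufsplit]; exact hZwsuf
      obtain ⟨z, hzw, hzall⟩ := IH (descNum A d) (lt_of_lt_of_le hdlt hn) w d d le_rfl
        harcwd ⟨w :: d :: t, ⟨tZ, htZ, hZwsuf'⟩, by simp⟩
        (fun l hl => second_mem hl.2) hdw hH2w
      have hwz : Reaches A w z := by
        have : z ∈ w :: (w₂ ++ m :: b₂) := hzall _ ⟨tZ, htZ, hZwsuf⟩
        exact (pf_mem_reaches hZwsuf this).1
      have hzv₀ : z ≠ v₀ := by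
        intro h
        exact hwv (reaches_antisymm hA (h ▸ hwz) (pf_reaches hZwpre))
      have hzlt : descNum A z < descNum A w := descNum_lt hA hwz hzw
      have hcut' : ∀ l, ViaP A T v₀ c₁ l → z ∈ l := by
        intro l hl
        have hwl : w ∈ l := hcut l hl
        obtain ⟨tl, htl, hlp⟩ := hl.1
        obtain ⟨s₁, s₂, hlsplit, hlpre, hlsuf⟩ := pf_mem_split hlp hwl
        have : z ∈ w :: s₂ := hzall _ ⟨tl, htl, hlsuf⟩
        rw [hlsplit]
        simp at this ⊢
        tauto
      exact IH (descNum A z) (lt_of_lt_of_le hzlt hn) v₀ c₁ z le_rfl harc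
        ⟨Z, ⟨tZ, htZ, hZp⟩, hZ2⟩ hcut' hzv₀ hH2
    · -- two disjoint T-paths from w: contradiction via menger_pair_contra
      exfalso
      rw [NoTwoDisj] at hH2w
      push_neg at hH2w
      obtain ⟨Q₁, Q₂, hQ₁, hQ₂, hQmeet, -⟩ := hH2w
      -- the prefix v₀ → w avoids R except at v₀
      -- find a contact of R with Q₁ ∪ Q₂
      obtain ⟨tQ₁, htQ₁, hQ₁p⟩ := hQ₁
      have hcont2 : ∃ a ∈ R, a ∈ Q₁ ∨ a ∈ Q₂ := by
        have hmeet1 : ∀ a ∈ w₁ ++ [w], a ∈ Q₁ → a = w := by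
          intro a ha hq
          exact reaches_antisymm hA ((pf_mem_reaches hZwpre ha).2)
            ((pf_mem_reaches hQ₁p hq).1)
        have hZ₁ : IsPathFromTo A ((w₁ ++ [w]) ++ Q₁.tail) v₀ tQ₁ :=
          pf_splice hZwpre hQ₁p hmeet1
        have : ¬ (∀ a ∈ (w₁ ++ [w]) ++ Q₁.tail, a ∈ R → a = v₀) := by
          intro hno
          exact hH2 _ R ⟨tQ₁, htQ₁, hZ₁⟩ ⟨tR, htR, hRp⟩ hno
        push_neg at this
        obtain ⟨a, haZ, haR, hav₀⟩ := this
        rcases mem_of_splice haZ with ha | ha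
        · exact absurd (hZR a ha haR) hav₀
        · exact ⟨a, haR, Or.inl ha⟩
      obtain ⟨ρ₁, μ, ρ₂, hρsplit, hμ, hρfirst⟩ :=
        exists_first_satisfying (fun a => a ∈ Q₁ ∨ a ∈ Q₂) hcont2
      have hρ₁' : ∀ b ∈ ρ₁, b ∉ Q₁ ∧ b ∉ Q₂ := by
        intro b hb
        have := hρfirst b hb
        push_neg at this
        exact this
      rcases hμ with hμ | hμ
      · exact menger_pair_contra hA hH2 hwv hZwpre hZR ⟨tR, htR, hRp⟩ hwR
          ⟨tQ₁, htQ₁, hQ₁p⟩ hQ₂ hQmeet hρsplit hμ hρ₁'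
      · exact menger_pair_contra hA hH2 hwv hZwpre hZR ⟨tR, htR, hRp⟩ hwR
          hQ₂ ⟨tQ₁, htQ₁, hQ₁p⟩ (fun a h2 h1 => hQmeet a h1 h2) hρsplit hμ
          (fun b hb => ⟨(hρ₁' b hb).2, (hρ₁' b hb).1⟩)
  · -- w after the first contact: reroute through R, missing w
    exfalso
    have hwm : w ∈ m :: b₂ := by
      rw [hbsplit] at hwZ
      simp at hwZ
      rcases hwZ with h | h | h
      · exact absurd h hwb
      · simp [h]
      · simp [h]
    have hwb₂ : w ∈ b₂ := by
      rcases List.mem_cons.mp hwm with h | h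
      · exact absurd h.symm hmw
      · exact h
    have hZpre : IsPathFromTo A (b₁ ++ [m]) v₀ m := (pf_split hZp hbsplit).1
    have hW' : IsPathFromTo A ((b₁ ++ [m]) ++ (m :: r₂).tail) v₀ tR := by
      apply pf_splice hZpre hRsuf
      intro a ha hmem
      simp at ha
      rcases ha with ha | ha
      · exfalso
        have haR : a ∈ R := by
          rw [hRsplit]
          rcases List.mem_cons.mp hmem with h | h
          · simp [h]
          · simp [h]
        have hav₀ : a = v₀ := by
          by_contra hane
          exact hfirst a ha ⟨haR, hane⟩
        rw [hav₀] at hmem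
        exact hv₀r₂ hmem
      · exact ha
    have hW'via : ViaP A T v₀ c₁ ((b₁ ++ [m]) ++ (m :: r₂).tail) := by
      refine ⟨⟨tR, htR, hW'⟩, ?_⟩
      have heq : (b₁ ++ [m]) ++ (m :: r₂).tail = b₁ ++ m :: r₂ := by simp
      rw [heq, ← tail_head?_append_cons_congr (ys := b₂) hb₁ne, ← hbsplit]
      exact hZ2
    have hwW' : w ∈ (b₁ ++ [m]) ++ (m :: r₂).tail := hcut _ hW'via
    simp only [List.tail_cons, List.mem_append, List.mem_singleton] at hwW'
    rcases hwW' with (hw1 | hw1) | hw1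
    · -- w ∈ b₁ : contradiction with nodup (w ∈ b₂)
      rw [hbsplit, List.nodup_append] at hZnd
      exact hZnd.2.2 _ hw1 _ (by simp [hwb₂]) rfl
    · exact hmw hw1.symm
    · exact hwR (by rw [hRsplit]; simp [hw1])

/-- Menger-type theorem: a vertex with `T`-access but no two internally disjoint
`T`-paths admits a cut vertex. -/
lemma menger2 (hA : Acyclic A) [Finite V] {v₀ : V}
    (hv₀ : v₀ ∉ T) (hacc : ∃ l, TPath A T v₀ l) (hH2 : NoTwoDisj A T v₀) :
    ∃ z, z ≠ v₀ ∧ ∀ l, TPath A T v₀ l → z ∈ l := by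
  obtain ⟨l, t, ht, hlp⟩ := hacc
  have hne : v₀ ≠ t := fun h => hv₀ (h ▸ ht)
  obtain ⟨c₁, s, hlsplit, harc, _⟩ := pf_second hlp hne
  have hc₁v₀ : c₁ ≠ v₀ := by
    intro h
    exact hA v₀ c₁ harc (h ▸ Relation.ReflTransGen.refl)
  exact menger_loop hA (descNum A c₁) v₀ c₁ c₁ le_rfl harc
    ⟨l, ⟨t, ht, hlp⟩, by rw [hlsplit]; simp⟩
    (fun l' hl' => second_mem hl'.2) hc₁v₀ hH2

end Menger

section Bridge

variable {N : PhyloNetwork V L}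

/-- If the only arc entering the descendant-closed set of `v` is `(τ, v)`, then
`(τ, v)` is a cut-arc; in a simple network its head must be a leaf. -/
lemma bridge_contra (hsimple : SimpleNet N) {τ v ρ : V}
    (hρ : IsRoot N.arcs ρ)
    (harc : (τ, v) ∈ N.arcs) (hnl : ¬ IsLeafV N.arcs v)
    (hcross : ∀ α β, (α, β) ∈ N.arcs → Reaches N.arcs v β → ¬ Reaches N.arcs v α →
      α = τ ∧ β = v) : False := by
  haveI := N.vfin
  have hvρ : ¬ Reaches N.arcs v ρ := by
    intro h
    have h2 : Reaches N.arcs ρ v := net_root_reaches N hρ v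
    have : v = ρ := reaches_antisymm N.acyclic h h2
    subst this
    have : indeg N.arcs v ≠ 0 := indeg_ne_zero_iff.mpr ⟨τ, harc⟩
    exact this hρ.1
  have hkey : ∀ u : V, Relation.ReflTransGen (UAdj (N.arcs \ {(τ, v)})) ρ u →
      ¬ Reaches N.arcs v u := by
    intro u h
    induction h with
    | refl => exact hvρ
    | tail _ hstep ih =>
      rename_i b c _
      intro hc
      rcases hstep with hbc | hcb
      · -- (b, c) ∈ A \ {e} : arc into the descendant set
        obtain ⟨hbc1, hbc2⟩ := hbc
        have := hcross b c hbc1 hc ih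
        apply hbc2
        simp [this.1, this.2]
      · -- (c, b) ∈ A : downward closure
        obtain ⟨hcb1, _⟩ := hcb
        exact ih (hc.tail hcb1)
  have hcut : CutArc N.arcs (τ, v) := by
    refine ⟨harc, fun hconn => ?_⟩
    exact hkey v (hconn ρ v) Relation.ReflTransGen.refl
  exact hnl (hsimple.2 (τ, v) hcut)

/-- The dominator recursion: no vertex can lie on every path from the root to
the "good" leaves. -/
lemma dominator_rec (hsimple : SimpleNet N) {S : Set L}
    (hS : SNSet (TN N) S) {ρ xx zz yy : V}
    (hρ : IsRoot N.arcs ρ)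
    (hx : GoodLeaf N S xx) (hz : GoodLeaf N S zz) (hxz : xx ≠ zz)
    (hy : IsLeafV N.arcs yy) (hyS : N.lab yy ∉ S) :
    ∀ n v, descNum N.arcs v ≤ n →
      (∀ l, TPath N.arcs {u | GoodLeaf N S u} ρ l → v ∈ l) → False := by
  haveI := N.vfin
  set A := N.arcs with hA
  set T : Set V := {u | GoodLeaf N S u} with hT
  intro n
  induction n using Nat.strong_induction_on with
  | _ n IH =>
  intro v hn hdom
  -- paths from the root to xx and zz
  obtain ⟨Px, hPx⟩ := reaches_pf (net_root_reaches N hρ xx)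
  obtain ⟨Pz, hPz⟩ := reaches_pf (net_root_reaches N hρ zz)
  have hPxT : TPath A T ρ Px := ⟨xx, hx, hPx⟩
  have hPzT : TPath A T ρ Pz := ⟨zz, hz, hPz⟩
  have hvPx : v ∈ Px := hdom Px hPxT
  have hvPz : v ∈ Pz := hdom Pz hPzT
  obtain ⟨px₁, px₂, hPxsplit, hPxpre, hPxsuf⟩ := pf_mem_split hPx hvPx
  obtain ⟨pz₁, pz₂, hPzsplit, hPzpre, hPzsuf⟩ := pf_mem_split hPz hvPz
  have hvx : Reaches A v xx := pf_reaches hPxsuf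
  have hvz : Reaches A v zz := pf_reaches hPzsuf
  by_cases hleaf : IsLeafV A v
  · -- v is a leaf on every good path: xx = v = zz
    have h1 : xx = v := sink_reaches_eq hleaf.2 hvx
    have h2 : zz = v := sink_reaches_eq hleaf.2 hvz
    exact hxz (h1.trans h2.symm)
  by_cases hgood : GoodV N S v
  · -- v is good: bridge argument or reticulation descent
    have hvρ : v ≠ ρ := by
      rintro rfl
      exact hyS (hgood yy hy (net_root_reaches N hρ yy))
    rcases N.vertex_type v with hv | hv | hv | hv
    · exact hvρ (N.root_unique v ρ hv hρ)
    · -- split vertex: the in-arc is a nontrivial cut-arc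
      obtain ⟨τ, hτ, hτuniq⟩ := indeg_one_unique hv.1
      refine bridge_contra hsimple hρ hτ hleaf ?_
      intro α β harcb hvβ hvα
      by_cases hβv : β = v
      · subst hβv
        exact ⟨hτuniq α harcb, rfl⟩
      · exfalso
        -- a path from the root through (α, β) to a good leaf, missing v
        obtain ⟨s, hsleaf, hβs⟩ := net_reaches_leaf N β
        have hslab : N.lab s ∈ S := hgood s hsleaf (hvβ.trans hβs)
        obtain ⟨q, hq⟩ := reaches_pf (net_root_reaches N hρ α)
        obtain ⟨r, hr⟩ := reaches_pf hβs
        have hdisj : ∀ a ∈ q, a ∉ r := by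
          intro a haq har
          have h1 : Reaches A a α := (pf_mem_reaches hq haq).2
          have h2 : Reaches A β a := (pf_mem_reaches hr har).1
          exact hvα (hvβ.trans (h2.trans h1))
        have hqr : IsPathFromTo A (q ++ r) ρ s := pf_append_arc hq harcb hr hdisj
        have hvqr : v ∈ q ++ r := hdom (q ++ r) ⟨s, ⟨hsleaf, hslab⟩, hqr⟩
        rcases List.mem_append.mp hvqr with h | h
        · exact hvα (pf_mem_reaches hq h).2
        · exact hβv (reaches_antisymm N.acyclic (pf_mem_reaches hr h).1 hvβ)
    · -- reticulation: descend to the unique child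
      obtain ⟨c, hc, hcuniq⟩ := outdeg_one_unique hv.2
      have hcv : c ≠ v := by
        intro h
        exact N.acyclic v c hc (h ▸ Relation.ReflTransGen.refl)
      have hclt : descNum A c < descNum A v :=
        descNum_lt N.acyclic (Relation.ReflTransGen.single hc) hcv
      refine IH (descNum A c) (lt_of_lt_of_le hclt hn) c le_rfl ?_
      intro l hl
      obtain ⟨t, ht, hlp⟩ := hl
      have hvl : v ∈ l := hdom l ⟨t, ht, hlp⟩
      obtain ⟨s₁, s₂, hlsplit, hlpre, hlsuf⟩ := pf_mem_split hlp hvl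
      have hvt : v ≠ t := by
        intro h
        exact hleaf (h ▸ ht.1)
      obtain ⟨d, t', hsufsplit, harcvd, _⟩ := pf_second hlsuf hvt
      have hdc : d = c := hcuniq d harcvd
      rw [hlsplit, hsufsplit, hdc]
      simp
    · exact hleaf hv
  · -- v is not good: Menger gives a strictly lower dominator
    have hy' : ∃ y', IsLeafV A y' ∧ Reaches A v y' ∧ N.lab y' ∉ S := by
      rw [GoodV] at hgood
      push_neg at hgood
      obtain ⟨y', h1, h2, h3⟩ := hgood
      exact ⟨y', h1, h2, h3⟩
    obtain ⟨y', hy'leaf, hvy', hy'lab⟩ := hy'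
    have hH2 : NoTwoDisj A T v := by
      intro l₁ l₂ h₁ h₂ hmeet
      obtain ⟨t₁, ht₁, h₁p⟩ := h₁
      obtain ⟨t₂, ht₂, h₂p⟩ := h₂
      exact fork_killer hS h₁p h₂p ht₁ ht₂ hy'leaf hy'lab hvy' hmeet
    have hvT : v ∉ T := fun h => hleaf h.1
    obtain ⟨z, hzv, hzcut⟩ := menger2 N.acyclic hvT ⟨v :: px₂, xx, hx, hPxsuf⟩ hH2
    have hvzr : Reaches A v z := by
      have : z ∈ v :: px₂ := hzcut _ ⟨xx, hx, hPxsuf⟩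
      exact (pf_mem_reaches hPxsuf this).1
    have hzlt : descNum A z < descNum A v := descNum_lt N.acyclic hvzr hzv
    refine IH (descNum A z) (lt_of_lt_of_le hzlt hn) z le_rfl ?_
    intro l hl
    obtain ⟨t, ht, hlp⟩ := hl
    have hvl : v ∈ l := hdom l ⟨t, ht, hlp⟩
    obtain ⟨s₁, s₂, hlsplit, hlpre, hlsuf⟩ := pf_mem_split hlp hvl
    have : z ∈ v :: s₂ := hzcut _ ⟨t, ht, hlsuf⟩
    rw [hlsplit]
    simp at this ⊢
    tauto

end Bridge

/-- (Lemma "singleton".) Let `N` be a simple network.  Then every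
SN-set of `T(N)` with more than one element is the whole leaf set of `N`;
equivalently, all nontrivial SN-sets of `T(N)` are singletons. -/
theorem simple_SNsets_singletons (V L : Type) (N : PhyloNetwork V L)
    (hsimple : SimpleNet N) (S : Set L)
    (hS : SNSet (TN N) S) (hcard : 1 < S.ncard) :
    S = leafSet N := by
  haveI := N.vfin
  -- S is contained in the leaf set
  have hsub : S ⊆ leafSet N := by
    intro ℓ hℓ
    obtain ⟨t, ht, hco⟩ := hS.1 hℓ
    obtain ⟨a, b, c, ha, hb, hc, hla, hlb, hlc, -⟩ := ht
    rcases hco with h | h | h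
    · exact ⟨a, ha, h ▸ hla⟩
    · exact ⟨b, hb, h ▸ hlb⟩
    · exact ⟨c, hc, h ▸ hlc⟩
  -- two distinct elements of S
  have hfin : S.Finite := by
    by_contra hinf
    rw [Set.Infinite.ncard (fun h => hinf h)] at hcard
    omega
  obtain ⟨ℓ₁, ℓ₂, hℓ₁, hℓ₂, hℓne⟩ := (Set.one_lt_ncard_iff hfin).mp hcard
  obtain ⟨xx, hxxleaf, hxxlab⟩ := hsub hℓ₁
  obtain ⟨zz, hzzleaf, hzzlab⟩ := hsub hℓ₂
  have hxz : xx ≠ zz := by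
    rintro rfl
    exact hℓne (hxxlab ▸ hzzlab ▸ rfl)
  -- the leaf set is contained in S
  apply Set.Subset.antisymm hsub
  intro ℓ hℓ
  by_contra hns
  obtain ⟨yy, hyleaf, hylab⟩ := hℓ
  obtain ⟨ρ, hρ⟩ := N.root_ex
  exact dominator_rec hsimple hS hρ
    ⟨hxxleaf, hxxlab.symm ▸ hℓ₁⟩ ⟨hzzleaf, hzzlab.symm ▸ hℓ₂⟩ hxz
    hyleaf (hylab.symm ▸ hns)
    (descNum N.arcs ρ) ρ le_rfl
    (fun l hl => by
      obtain ⟨t, ht, hlp⟩ := hl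
      exact pf_head_mem hlp)

end Phylo
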